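/- arXiv:1307.2975 — 4 statements merged into one kernel-verified Lean document; each statement's English description precedes it below -/
import Mathlib

section
/- Let q : ℝ → ℂ be continuous, let z ∈ ℝ, and set U(x) := −i z σ₃ + Q(q(x)). If φ : ℝ → M₂(ℂ) is differentiable with φ′(x) = U(x) φ(x) for all x ∈ ℝ and φ(0) = I (the 2×2 identity matrix), then for every x ∈ ℝ the matrix φ(x) is invertible and φ(x)⁻¹ equals the conjugate transpose φ(x)ᴴ. -/
open MeasureTheory Matrix ENNReal Filter

noncomputable section

/-- The Pauli matrix `σ₃ = diag(1, -1)`. -/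
def sigma3 : Matrix (Fin 2) (Fin 2) ℂ := !![1, 0; 0, -1]

/-- `Q(w)` : the off-diagonal matrix with `(1,2)`-entry `w` and `(2,1)`-entry `-conj w`. -/
def Qm (w : ℂ) : Matrix (Fin 2) (Fin 2) ℂ := !![0, w; -(starRingEnd ℂ w), 0]

/-- The Hermitian inner product `⟨u,v⟩ = conj u₁ * v₁ + conj u₂ * v₂` on `ℂ²`. -/
def inn (u v : Fin 2 → ℂ) : ℂ := starRingEnd ℂ (u 0) * v 0 + starRingEnd ℂ (u 1) * v 1

/-- The outer product `u ⊗ conj v`. -/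
def outer (u v : Fin 2 → ℂ) : Matrix (Fin 2) (Fin 2) ℂ :=
  Matrix.of fun a b => u a * starRingEnd ℂ (v b)

/-- The Gramian matrix `M_{k,j} = -i ⟨s_j, s_k⟩ / (conj z_k - z_j)`. -/
def gram {n : ℕ} (z : Fin n → ℂ) (s : Fin n → Fin 2 → ℂ) : Matrix (Fin n) (Fin n) ℂ :=
  Matrix.of fun k j => -Complex.I * inn (s j) (s k) / (starRingEnd ℂ (z k) - z j)

/-- The `(j,k)`-cofactor `D_{j,k}` of a square matrix. -/
def cof {n : ℕ} (A : Matrix (Fin n) (Fin n) ℂ) (j k : Fin n) : ℂ := A.adjugate k j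

/-- The linear system (L1): `i s_k = ∑_j (⟨s_j,s_k⟩/(conj z_k - z_j)) r_j`. -/
def L1sys {n : ℕ} (z : Fin n → ℂ) (s r : Fin n → Fin 2 → ℂ) : Prop :=
  ∀ k, Complex.I • s k = ∑ j, (inn (s j) (s k) / (starRingEnd ℂ (z k) - z j)) • r j

/-- The linear system (L2): `i r_k = ∑_j (⟨r_j,r_k⟩/(conj z_j - z_k)) s_j`. -/
def L2sys {n : ℕ} (z : Fin n → ℂ) (s r : Fin n → Fin 2 → ℂ) : Prop :=
  ∀ k, Complex.I • r k = ∑ j, (inn (r j) (r k) / (starRingEnd ℂ (z j) - z k)) • s j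

/-- A classical solution of the cubic NLS equation `i q_t + q_xx + 2 |q|² q = 0`;
functions of `(x, t)` are encoded as `q : ℝ → ℝ → ℂ`, `x` first. -/
def IsClassicalNLS (q : ℝ → ℝ → ℂ) : Prop :=
  (∀ t, ContDiff ℝ 2 fun x => q x t) ∧ (∀ x, ContDiff ℝ 1 fun t => q x t) ∧
    ∀ x t, Complex.I * deriv (fun τ => q x τ) t + deriv (deriv fun y => q y t) x
      + 2 * ((‖q x t‖ : ℝ) : ℂ) ^ 2 * q x t = 0

/-- The `x`-part Lax matrix `U = -i z σ₃ + Q(w)`. -/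
def Ux (z w : ℂ) : Matrix (Fin 2) (Fin 2) ℂ := (-(Complex.I * z)) • sigma3 + Qm w

/-- The `t`-part Lax matrix `V = i(|w|² - 2z²) σ₃ + 2 z Q(w) - i Q(w_x) σ₃`. -/
def Vt (z w wx : ℂ) : Matrix (Fin 2) (Fin 2) ℂ :=
  (Complex.I * (((‖w‖ : ℝ) : ℂ) ^ 2 - 2 * z ^ 2)) • sigma3 + (2 * z) • Qm w
    - Complex.I • (Qm wx * sigma3)

/-- The dressed potential `q = q₀ - (2/D) ∑_{k,j} D_{j,k} s_{j,1} conj (s_{k,2})` (pointwise). -/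
def dressQ {n : ℕ} (z : Fin n → ℂ) (q0 : ℂ) (s : Fin n → Fin 2 → ℂ) : ℂ :=
  q0 - 2 / (gram z s).det *
    ∑ k, ∑ j, cof (gram z s) j k * s j 0 * starRingEnd ℂ (s k 1)

/-- `Σ^S` of the 2-soliton, as a function of the phases `φ₁, φ₂, ψ₁, ψ₂`. -/
def SigmaSof (η₁ η₂ ξ₁ ξ₂ φ₁ φ₂ ψ₁ ψ₂ : ℝ) : ℂ :=
  (Complex.exp (-2*(η₂:ℂ)*(φ₂:ℂ) + 2*Complex.I*(ψ₁:ℂ)) +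
      Complex.exp (2*(η₂:ℂ)*(φ₂:ℂ) + 2*Complex.I*(ψ₁:ℂ))) / (2*(η₂:ℂ))
  + (Complex.exp (-2*(η₁:ℂ)*(φ₁:ℂ) + 2*Complex.I*(ψ₂:ℂ)) +
      Complex.exp (2*(η₁:ℂ)*(φ₁:ℂ) + 2*Complex.I*(ψ₂:ℂ))) / (2*(η₁:ℂ))
  - (Complex.exp (-2*(η₂:ℂ)*(φ₂:ℂ) + 2*Complex.I*(ψ₁:ℂ)) +
      Complex.exp (2*(η₁:ℂ)*(φ₁:ℂ) + 2*Complex.I*(ψ₂:ℂ))) /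
        ((η₁:ℂ) + (η₂:ℂ) + Complex.I*((ξ₁:ℂ) - (ξ₂:ℂ)))
  - (Complex.exp (-2*(η₁:ℂ)*(φ₁:ℂ) + 2*Complex.I*(ψ₂:ℂ)) +
      Complex.exp (2*(η₂:ℂ)*(φ₂:ℂ) + 2*Complex.I*(ψ₁:ℂ))) /
        ((η₁:ℂ) + (η₂:ℂ) - Complex.I*((ξ₁:ℂ) - (ξ₂:ℂ)))

/-- `D^S` of the 2-soliton, as a function of the phases `φ₁, φ₂, ψ₁, ψ₂`. -/
def DSof (η₁ η₂ ξ₁ ξ₂ φ₁ φ₂ ψ₁ ψ₂ : ℝ) : ℂ :=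
  (Complex.exp (-2*(η₁:ℂ)*(φ₁:ℂ)) + Complex.exp (2*(η₁:ℂ)*(φ₁:ℂ))) *
      (Complex.exp (-2*(η₂:ℂ)*(φ₂:ℂ)) + Complex.exp (2*(η₂:ℂ)*(φ₂:ℂ))) / (4*(η₁:ℂ)*(η₂:ℂ))
  - (Complex.exp (-(η₁:ℂ)*(φ₁:ℂ) - (η₂:ℂ)*(φ₂:ℂ) + Complex.I*((ψ₁:ℂ) - (ψ₂:ℂ))) +
      Complex.exp ((η₁:ℂ)*(φ₁:ℂ) + (η₂:ℂ)*(φ₂:ℂ) - Complex.I*((ψ₁:ℂ) - (ψ₂:ℂ)))) *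
    (Complex.exp (-(η₁:ℂ)*(φ₁:ℂ) - (η₂:ℂ)*(φ₂:ℂ) - Complex.I*((ψ₁:ℂ) - (ψ₂:ℂ))) +
      Complex.exp ((η₁:ℂ)*(φ₁:ℂ) + (η₂:ℂ)*(φ₂:ℂ) + Complex.I*((ψ₁:ℂ) - (ψ₂:ℂ)))) /
    (((η₁:ℂ) + (η₂:ℂ))^2 + ((ξ₁:ℂ) - (ξ₂:ℂ))^2)

/-- The phase `φ = x + 4 ξ t - x_c`. -/
def phiSol (ξ xc x t : ℝ) : ℝ := x + 4*ξ*t - xc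

/-- The phase `ψ = θ - ξ (x + 2 ξ t - x_c) + 2 η² t`. -/
def psiSol (θ ξ xc η x t : ℝ) : ℝ := θ - ξ*(x + 2*ξ*t - xc) + 2*η^2*t

/-- `D^S(x,t)` for the 2-soliton with parameters `η₁, η₂, ξ₁, ξ₂, x₁, x₂, θ₁, θ₂`. -/
def twoSolitonD (η₁ η₂ ξ₁ ξ₂ x₁ x₂ θ₁ θ₂ x t : ℝ) : ℂ :=
  DSof η₁ η₂ ξ₁ ξ₂ (phiSol ξ₁ x₁ x t) (phiSol ξ₂ x₂ x t)
    (psiSol θ₁ ξ₁ x₁ η₁ x t) (psiSol θ₂ ξ₂ x₂ η₂ x t)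

/-- `Σ^S(x,t)` for the 2-soliton. -/
def twoSolitonSigma (η₁ η₂ ξ₁ ξ₂ x₁ x₂ θ₁ θ₂ x t : ℝ) : ℂ :=
  SigmaSof η₁ η₂ ξ₁ ξ₂ (phiSol ξ₁ x₁ x t) (phiSol ξ₂ x₂ x t)
    (psiSol θ₁ ξ₁ x₁ η₁ x t) (psiSol θ₂ ξ₂ x₂ η₂ x t)

/-- The 2-soliton `q^S = 2 Σ^S / D^S`. -/
def twoSoliton (η₁ η₂ ξ₁ ξ₂ x₁ x₂ θ₁ θ₂ x t : ℝ) : ℂ :=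
  2 * twoSolitonSigma η₁ η₂ ξ₁ ξ₂ x₁ x₂ θ₁ θ₂ x t / twoSolitonD η₁ η₂ ξ₁ ξ₂ x₁ x₂ θ₁ θ₂ x t

/-- The separable (Jost-type) form
`s = e^{-i conj z (x - x_j) - 2 i conj z² t + i θ_j} f - e^{i conj z (x - x_j) + 2 i conj z² t - i θ_j} g`. -/
def jost (zj : ℂ) (xj θj : ℝ) (f g : ℝ → ℝ → Fin 2 → ℂ) (x t : ℝ) : Fin 2 → ℂ :=
  Complex.exp (-(Complex.I) * starRingEnd ℂ zj * ((x:ℂ) - (xj:ℂ))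
      - 2*Complex.I*(starRingEnd ℂ zj)^2*(t:ℂ) + Complex.I*(θj:ℂ)) • f x t
  - Complex.exp (Complex.I * starRingEnd ℂ zj * ((x:ℂ) - (xj:ℂ))
      + 2*Complex.I*(starRingEnd ℂ zj)^2*(t:ℂ) - Complex.I*(θj:ℂ)) • g x t

/-- The pair of eigenvalues `z_j = ξ_j + i η_j`, `j = 1, 2`. -/
def zvec (ξ₁ η₁ ξ₂ η₂ : ℝ) : Fin 2 → ℂ :=
  ![(ξ₁:ℂ) + (η₁:ℂ)*Complex.I, (ξ₂:ℂ) + (η₂:ℂ)*Complex.I]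

/-- The two vector functions `s₁, s₂` in separable form. -/
def sJ (ξ₁ η₁ ξ₂ η₂ x₁ x₂ θ₁ θ₂ : ℝ) (f g : Fin 2 → ℝ → ℝ → Fin 2 → ℂ) (j : Fin 2)
    (x t : ℝ) : Fin 2 → ℂ :=
  jost (zvec ξ₁ η₁ ξ₂ η₂ j) (![x₁, x₂] j) (![θ₁, θ₂] j) (f j) (g j) x t

/-- The explicit vector solutions used to build the `n`-soliton from `q₀ = 0`. -/
def solS {n : ℕ} (z : Fin n → ℂ) (xs θ : Fin n → ℝ) (j : Fin n) (x t : ℝ) : Fin 2 → ℂ :=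
  ![Complex.exp (-(Complex.I) * starRingEnd ℂ (z j) * ((x:ℂ) - ((xs j : ℝ):ℂ))
      - 2*Complex.I*(starRingEnd ℂ (z j))^2*(t:ℂ) + Complex.I*((θ j : ℝ):ℂ)),
    -Complex.exp (Complex.I * starRingEnd ℂ (z j) * ((x:ℂ) - ((xs j : ℝ):ℂ))
      + 2*Complex.I*(starRingEnd ℂ (z j))^2*(t:ℂ) - Complex.I*((θ j : ℝ):ℂ))]

/-- The `n`-soliton with parameters `{ξ_j, η_j, x_j, θ_j}`. -/
def nSoliton {n : ℕ} (ξ η xs θ : Fin n → ℝ) (x t : ℝ) : ℂ :=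
  dressQ (fun j => (ξ j : ℂ) + (η j : ℂ)*Complex.I) 0
    (fun j => solS (fun j => (ξ j : ℂ) + (η j : ℂ)*Complex.I) xs θ j x t)

/-- If `φ` solves `φ' = (-i z σ₃ + Q(q)) φ` with real spectral parameter `z` and `φ(0) = I`,
then `φ(x)` is invertible with inverse its conjugate transpose. -/
theorem stmt_0 (q : ℝ → ℂ) (hq : Continuous q) (z : ℝ)
    (φ : ℝ → Matrix (Fin 2) (Fin 2) ℂ)
    (hφ : ∀ x i j, HasDerivAt (fun y => φ y i j) ((Ux (z : ℂ) (q x) * φ x) i j) x)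
    (hφ0 : φ 0 = 1) :
    ∀ x, IsUnit (φ x) ∧ (φ x)⁻¹ = (φ x).conjTranspose := by
  have hskew : ∀ x, (Ux (z : ℂ) (q x)).conjTranspose = -(Ux (z : ℂ) (q x)) := by
    intro x
    ext i j
    fin_cases i <;> fin_cases j <;>
      simp [Ux, sigma3, Qm, Matrix.conjTranspose_apply, Matrix.add_apply,
        Matrix.smul_apply, Matrix.neg_apply, Complex.conj_ofReal, mul_comm]
  have hG : ∀ x i j, HasDerivAt (fun y => ((φ y).conjTranspose * φ y) i j) 0 x := by
    intro x i j
    have h1 : HasDerivAt (fun y => ((φ y).conjTranspose * φ y) i j)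
        (∑ k, (starRingEnd ℂ ((Ux (z : ℂ) (q x) * φ x) k i) * φ x k j
          + starRingEnd ℂ (φ x k i) * (Ux (z : ℂ) (q x) * φ x) k j)) x := by
      have : ∀ y, ((φ y).conjTranspose * φ y) i j
          = ∑ k, starRingEnd ℂ (φ y k i) * φ y k j := by
        intro y
        simp [Matrix.mul_apply, Matrix.conjTranspose_apply]
      simp only [this]
      exact HasDerivAt.fun_sum fun k _ => ((hφ x k i).star.mul (hφ x k j))
    convert h1 using 1
    have : (∑ k, (starRingEnd ℂ ((Ux (z : ℂ) (q x) * φ x) k i) * φ x k j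
          + starRingEnd ℂ (φ x k i) * (Ux (z : ℂ) (q x) * φ x) k j))
        = ((Ux (z : ℂ) (q x) * φ x).conjTranspose * φ x
          + (φ x).conjTranspose * (Ux (z : ℂ) (q x) * φ x)) i j := by
      simp [Matrix.mul_apply, Matrix.conjTranspose_apply, Matrix.add_apply,
        Finset.sum_add_distrib, Fin.sum_univ_two]
      ring
    rw [this, Matrix.conjTranspose_mul, hskew, Matrix.mul_assoc]
    simp [Matrix.neg_mul]
  have hconst : ∀ x, (φ x).conjTranspose * φ x = 1 := by
    intro x
    have := hφ0
    ext i j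
    have hdiff : Differentiable ℝ (fun y => ((φ y).conjTranspose * φ y) i j) :=
      fun y => (hG y i j).differentiableAt
    have hderiv : ∀ y, deriv (fun y => ((φ y).conjTranspose * φ y) i j) y = 0 :=
      fun y => (hG y i j).deriv
    have := is_const_of_deriv_eq_zero hdiff hderiv x 0
    rw [this, hφ0]
    simp
  intro x
  have h1 : (φ x).conjTranspose * φ x = 1 := hconst x
  have h2 : φ x * (φ x).conjTranspose = 1 := (mul_eq_one_comm).mp h1
  exact ⟨⟨⟨φ x, (φ x).conjTranspose, h2, h1⟩, rfl⟩, Matrix.inv_eq_left_inv h1⟩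
end
end

section
/- Let n ≥ 1, let z₁,…,z_n ∈ ℂ be distinct with Im z_k > 0 for each k, and let s₁,…,s_n ∈ ℂ² be such that the Gramian matrix M is invertible. Then M is Hermitian (so D := det M is real and nonzero), and with r_k := Σ_{j=1}^n (D_{j,k}/D) s_j (the unique solution of the linear system (L1)), the 2×2 matrix Σ_{k=1}^n ( (r_k ⊗ conj(s_k)) σ₃ − σ₃ (s_k ⊗ conj(r_k)) ) equals Q(w), where w := −(2/D) Σ_{k=1}^n Σ_{j=1}^n D_{j,k} s_{j,1} conj(s_{k,2}); in particular this matrix has zero diagonal entries. -/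
open MeasureTheory Matrix ENNReal Filter

noncomputable section

/-- The Gramian is Hermitian with real nonzero determinant, and the reconstruction
matrix `∑_k (r_k ⊗ conj s_k σ₃ - σ₃ s_k ⊗ conj r_k)` equals `Q(w)` for the dressed potential
`w = -(2/D) ∑_{k,j} D_{j,k} s_{j,1} conj (s_{k,2})`. -/
theorem stmt_4 (n : ℕ) (hn : 1 ≤ n) (z : Fin n → ℂ) (hz : Function.Injective z)
    (him : ∀ k, 0 < (z k).im) (s : Fin n → Fin 2 → ℂ) (hM : IsUnit (gram z s))
    (r : Fin n → Fin 2 → ℂ)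
    (hr : ∀ k i, r k i = ∑ j, cof (gram z s) j k / (gram z s).det * s j i) :
    (gram z s).IsHermitian ∧ ((gram z s).det).im = 0 ∧ (gram z s).det ≠ 0 ∧
      ∑ k, (outer (r k) (s k) * sigma3 - sigma3 * outer (s k) (r k)) =
        Qm (-(2 / (gram z s).det) *
          ∑ k, ∑ j, cof (gram z s) j k * s j 0 * starRingEnd ℂ (s k 1)) := by

  have hHerm : (gram z s).IsHermitian := by
    ext i j
    simp only [Matrix.conjTranspose_apply, _root_.gram, Matrix.of_apply, inn, ← starRingEnd_apply]
    simp only [map_div₀, _root_.map_mul, map_add, map_sub, map_neg, Complex.conj_conj,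
      Complex.conj_I]
    rw [show (starRingEnd ℂ) (z i) - z j = -(z j - (starRingEnd ℂ) (z i)) by ring, div_neg]
    ring
  set A := gram z s with hA
  set D := A.det with hDdef
  have hDstar : starRingEnd ℂ D = D := by
    have h := A.det_conjTranspose
    rw [hHerm.eq] at h
    rw [starRingEnd_apply]
    exact h.symm
  have hDre : D.im = 0 := Complex.conj_eq_iff_im.mp hDstar
  have hDne : D ≠ 0 := ((Matrix.isUnit_iff_isUnit_det A).mp hM).ne_zero
  have hadj : ∀ j k, starRingEnd ℂ (cof A j k) = cof A k j := by
    intro j k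
    have h := congrFun (congrFun hHerm.adjugate.eq j) k
    rw [Matrix.conjTranspose_apply] at h
    rw [cof, cof, starRingEnd_apply]
    exact h
  have hrc : ∀ k (b : Fin 2), starRingEnd ℂ (r k b) =
      ∑ j, cof A k j / D * starRingEnd ℂ (s j b) := by
    intro k b
    rw [hr, map_sum]
    refine Finset.sum_congr rfl fun j _ => ?_
    rw [_root_.map_mul, map_div₀, hadj, hDstar]
  have key : ∀ a b : Fin 2,
      ∑ k, r k a * starRingEnd ℂ (s k b)
        = (∑ k, ∑ j, cof A j k * s j a * starRingEnd ℂ (s k b)) / D := by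
    intro a b
    rw [Finset.sum_div]
    refine Finset.sum_congr rfl fun k _ => ?_
    rw [hr, Finset.sum_mul, Finset.sum_div]
    exact Finset.sum_congr rfl fun j _ => by ring
  have key2 : ∀ a b : Fin 2,
      ∑ k, s k a * starRingEnd ℂ (r k b)
        = (∑ k, ∑ j, cof A j k * s j a * starRingEnd ℂ (s k b)) / D := by
    intro a b
    have h1 : ∑ k, s k a * starRingEnd ℂ (r k b)
        = ∑ k, ∑ j, cof A k j * s k a * starRingEnd ℂ (s j b) / D := by
      refine Finset.sum_congr rfl fun k _ => ?_
      rw [hrc, Finset.mul_sum]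
      exact Finset.sum_congr rfl fun j _ => by ring
    rw [h1, Finset.sum_comm]
    simp only [Finset.sum_div]
  have hTconj : ∀ a b : Fin 2,
      starRingEnd ℂ (∑ k, ∑ j, cof A j k * s j a * starRingEnd ℂ (s k b))
        = ∑ k, ∑ j, cof A j k * s j b * starRingEnd ℂ (s k a) := by
    intro a b
    calc starRingEnd ℂ (∑ k, ∑ j, cof A j k * s j a * starRingEnd ℂ (s k b))
        = ∑ k, ∑ j, cof A k j * starRingEnd ℂ (s j a) * s k b := by
          rw [map_sum]
          refine Finset.sum_congr rfl fun k _ => ?_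
          rw [map_sum]
          refine Finset.sum_congr rfl fun j _ => ?_
          rw [_root_.map_mul, _root_.map_mul, hadj, Complex.conj_conj]
      _ = ∑ k, ∑ j, cof A j k * s j b * starRingEnd ℂ (s k a) := by
          rw [Finset.sum_comm]
          exact Finset.sum_congr rfl fun k _ => Finset.sum_congr rfl fun j _ => by ring
  refine ⟨hHerm, hDre, hDne, ?_⟩
  ext a b
  rw [Matrix.sum_apply]
  fin_cases a <;> fin_cases b <;>
    simp only [Matrix.sub_apply, Matrix.mul_apply, outer, sigma3, Qm, Matrix.of_apply,
      Fin.sum_univ_two, Fin.isValue, Fin.mk_zero, Fin.mk_one, Matrix.cons_val', Matrix.cons_val_zero,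
      Matrix.cons_val_one, Matrix.head_cons, Matrix.empty_val', Matrix.cons_val_fin_one,
      Matrix.head_fin_const, mul_one, mul_zero, zero_mul, one_mul, add_zero, zero_add, mul_neg,
      neg_mul, neg_zero, zero_sub, sub_zero, neg_neg]
  · rw [Finset.sum_sub_distrib, key, key2, sub_self]
  · rw [Finset.sum_sub_distrib, Finset.sum_neg_distrib, key, key2]
    ring
  · rw [Finset.sum_sub_distrib, Finset.sum_neg_distrib, key, key2, map_neg, _root_.map_mul,
      map_div₀, hDstar, hTconj, Complex.conj_ofNat]
    ring
  · simp only [sub_neg_eq_add]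
    rw [Finset.sum_add_distrib, Finset.sum_neg_distrib, key, key2, neg_add_cancel]
end
end

section
/- Let q₀ be a classical solution of the cubic NLS equation, and let z₁,…,z_n ∈ ℂ be distinct with Im z_k > 0. Suppose s₁,…,s_n : ℝ×ℝ → ℂ² are continuously differentiable and satisfy both ∂_x s_k = −i conj(z_k) σ₃ s_k + Q(q₀) s_k and ∂_t s_k = i(|q₀|² − 2 conj(z_k)²) σ₃ s_k + 2 conj(z_k) Q(q₀) s_k − i Q(∂_x q₀) σ₃ s_k at every (x,t). Suppose the Gramian matrix M(x,t) of (z₁,…,z_n; s₁(x,t),…,s_n(x,t)) is invertible for all (x,t), let r_k(x,t) be the unique solution of the linear system (L1), and define q(x,t) := q₀(x,t) − (2/D(x,t)) Σ_{k,j=1}^n D_{j,k}(x,t) s_{j,1}(x,t) conj(s_{k,2}(x,t)). Then each r_k satisfies ∂_t r_k = i(|q|² − 2 z_k²) σ₃ r_k + 2 z_k Q(q) r_k − i Q(∂_x q) σ₃ r_k at every (x,t). -/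
open MeasureTheory Matrix ENNReal Filter

noncomputable section

/-! ### Auxiliary machinery for `stmt_9` -/

namespace NLS9

open Complex ComplexConjugate Finset

lemma absq (w : ℂ) : ((‖w‖ : ℝ) : ℂ)^2 = w * conj w := by
  rw [← Complex.ofReal_pow, Complex.sq_norm, Complex.mul_conj]

lemma inn_conj (u v : Fin 2 → ℂ) : conj (inn u v) = inn v u := by
  simp [inn]; ring

lemma Ux_mulVec0 (ζ w : ℂ) (v : Fin 2 → ℂ) :
    ((Ux ζ w).mulVec v) 0 = -(I*ζ)*v 0 + w*v 1 := by
  simp [Ux, Qm, sigma3, Matrix.mulVec, dotProduct, Fin.sum_univ_two]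

lemma Ux_mulVec1 (ζ w : ℂ) (v : Fin 2 → ℂ) :
    ((Ux ζ w).mulVec v) 1 = -(conj w)*v 0 + I*ζ*v 1 := by
  simp [Ux, Qm, sigma3, Matrix.mulVec, dotProduct, Fin.sum_univ_two]

lemma Vt_mulVec0 (ζ w wx : ℂ) (v : Fin 2 → ℂ) :
    ((Vt ζ w wx).mulVec v) 0 = I*(w * conj w - 2*ζ^2)*v 0 + (2*ζ*w + I*wx)*v 1 := by
  simp [Vt, Qm, sigma3, Matrix.mulVec, dotProduct, Fin.sum_univ_two,
    Matrix.mul_apply, absq]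

lemma Vt_mulVec1 (ζ w wx : ℂ) (v : Fin 2 → ℂ) :
    ((Vt ζ w wx).mulVec v) 1 = (-(2*ζ*conj w) + I*conj wx)*v 0 - I*(w * conj w - 2*ζ^2)*v 1 := by
  simp [Vt, Qm, sigma3, Matrix.mulVec, dotProduct, Fin.sum_univ_two,
    Matrix.mul_apply, absq]; ring

lemma Ux_adj (q0 zj zk : ℂ) (u v : Fin 2 → ℂ) :
    inn ((Ux (conj zj) q0).mulVec u) v + inn u ((Ux (conj zk) q0).mulVec v)
    = (conj zk - zj) * (-I * (conj (u 0) * v 0 - conj (u 1) * v 1)) := by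
  simp only [inn, Ux_mulVec0, Ux_mulVec1, map_add, _root_.map_mul, map_sub, map_neg,
    Complex.conj_I, Complex.conj_conj]
  ring

lemma Vt_adj (q0 q0x zj zk : ℂ) (u v : Fin 2 → ℂ) :
    inn ((Vt (conj zj) q0 q0x).mulVec u) v + inn u ((Vt (conj zk) q0 q0x).mulVec v)
    = (conj zk - zj) * (-(2*I)*(conj zk + zj) * (conj (u 0) * v 0 - conj (u 1) * v 1)
        + 2*(conj (u 0) * q0 * v 1 - conj (u 1) * conj q0 * v 0)) := by
  simp only [inn, Vt_mulVec0, Vt_mulVec1, map_add, _root_.map_mul, map_sub, map_neg,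
    map_pow, map_ofNat, Complex.conj_I, Complex.conj_conj]
  ring

section Pointwise

variable {n : ℕ} {z : Fin n → ℂ} {S R : Fin n → Fin 2 → ℂ}

lemma L1b (hL : L1sys z S R) (k : Fin n) (b : Fin 2) :
    I * S k b = ∑ j, inn (S j) (S k) / (conj (z k) - z j) * R j b := by
  have := congrFun (hL k) b
  simpa [Finset.sum_apply, Pi.smul_apply, smul_eq_mul] using this

lemma CE (hL : L1sys z S R) (k : Fin n) (a : Fin 2) :
    I * conj (S k a) = ∑ j, inn (S k) (S j) / (conj (z j) - z k) * conj (R j a) := by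
  have h := congrArg conj (L1b hL k a)
  simp only [_root_.map_mul, map_sum, map_div₀, Complex.conj_I, inn_conj, map_sub,
    Complex.conj_conj] at h
  rw [show (-I * conj (S k a) = ∑ j, inn (S k) (S j) / (z k - conj (z j)) * conj (R j a))
      = (-I * conj (S k a) = ∑ j, -(inn (S k) (S j) / (conj (z j) - z k) * conj (R j a)))
    from congrArg _ (Finset.sum_congr rfl fun j _ => by
      rw [show z k - conj (z j) = -(conj (z j) - z k) by ring, div_neg]; ring),
    Finset.sum_neg_distrib] at h
  linear_combination -h

lemma KI (hL : L1sys z S R) (a b : Fin 2) :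
    ∑ j, conj (S j a) * R j b = ∑ j, conj (R j a) * S j b := by
  have key : I * ∑ j, conj (S j a) * R j b = I * ∑ j, conj (R j a) * S j b := by
    calc I * ∑ j, conj (S j a) * R j b
        = ∑ k, (I * conj (S k a)) * R k b := by
          rw [Finset.mul_sum]; exact sum_congr rfl fun k _ => by ring
      _ = ∑ k, (∑ j, inn (S k) (S j) / (conj (z j) - z k) * conj (R j a)) * R k b := by
          exact sum_congr rfl fun k _ => by rw [← CE hL k a]
      _ = ∑ k, ∑ j, conj (R j a) * (inn (S k) (S j) / (conj (z j) - z k) * R k b) := by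
          exact sum_congr rfl fun k _ => by
            rw [Finset.sum_mul]; exact sum_congr rfl fun j _ => by ring
      _ = ∑ j, conj (R j a) * ∑ k, inn (S k) (S j) / (conj (z j) - z k) * R k b := by
          rw [Finset.sum_comm]; exact sum_congr rfl fun j _ => by rw [Finset.mul_sum]
      _ = ∑ j, conj (R j a) * (I * S j b) := sum_congr rfl fun j _ => by rw [← L1b hL j b]
      _ = I * ∑ j, conj (R j a) * S j b := by
          rw [Finset.mul_sum]; exact sum_congr rfl fun j _ => by ring
  exact mul_left_cancel₀ I_ne_zero key

lemma KZ (hL : L1sys z S R) (hd : ∀ k j, conj (z k) - z j ≠ 0) (a b : Fin 2) :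
    ∑ j, z j * (conj (S j a) * R j b) - ∑ j, conj (z j) * (conj (R j a) * S j b)
      = I * ((∑ j, conj (S j a) * R j 0) * (∑ j, conj (S j 0) * R j b)
           + (∑ j, conj (S j a) * R j 1) * (∑ j, conj (S j 1) * R j b)) := by
  have key : I * ∑ j, z j * (conj (S j a) * R j b)
      = I * ∑ j, conj (z j) * (conj (R j a) * S j b)
        - ((∑ j, conj (S j a) * R j 0) * (∑ j, conj (S j 0) * R j b)
           + (∑ j, conj (S j a) * R j 1) * (∑ j, conj (S j 1) * R j b)) := by
    calc I * ∑ j, z j * (conj (S j a) * R j b)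
        = ∑ k, (z k * R k b) * (I * conj (S k a)) := by
          rw [Finset.mul_sum]; exact sum_congr rfl fun k _ => by ring
      _ = ∑ k, ∑ j, (z k * R k b) * (inn (S k) (S j) / (conj (z j) - z k) * conj (R j a)) := by
          exact sum_congr rfl fun k _ => by rw [CE hL k a, Finset.mul_sum]
      _ = ∑ j, ∑ k, (z k * R k b) * (inn (S k) (S j) / (conj (z j) - z k) * conj (R j a)) :=
          Finset.sum_comm
      _ = ∑ j, ∑ k, (conj (R j a) * (conj (z j) * (inn (S k) (S j) / (conj (z j) - z k) * R k b))
            - conj (R j a) * (inn (S k) (S j) * R k b)) := by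
          refine sum_congr rfl fun j _ => sum_congr rfl fun k _ => ?_
          have hkj := hd j k
          field_simp
          ring
      _ = ∑ j, (conj (R j a) * (conj (z j) * ∑ k, inn (S k) (S j) / (conj (z j) - z k) * R k b)
            - conj (R j a) * ∑ k, inn (S k) (S j) * R k b) := by
          refine sum_congr rfl fun j _ => ?_
          rw [Finset.sum_sub_distrib, ← Finset.mul_sum, ← Finset.mul_sum, ← Finset.mul_sum]
      _ = ∑ j, (conj (R j a) * (conj (z j) * (I * S j b))
            - conj (R j a) * ∑ k, inn (S k) (S j) * R k b) := by
          refine sum_congr rfl fun j _ => by rw [← L1b hL j b]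
      _ = I * ∑ j, conj (z j) * (conj (R j a) * S j b)
            - ∑ j, conj (R j a) * ∑ k, inn (S k) (S j) * R k b := by
          rw [Finset.sum_sub_distrib, Finset.mul_sum]
          congr 1
          exact sum_congr rfl fun j _ => by ring
      _ = I * ∑ j, conj (z j) * (conj (R j a) * S j b)
            - ((∑ j, conj (S j a) * R j 0) * (∑ j, conj (S j 0) * R j b)
             + (∑ j, conj (S j a) * R j 1) * (∑ j, conj (S j 1) * R j b)) := by
          congr 1
          calc ∑ j, conj (R j a) * ∑ k, inn (S k) (S j) * R k b
              = ∑ j, ((conj (R j a) * S j 0) * ∑ k, conj (S k 0) * R k b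
                    + (conj (R j a) * S j 1) * ∑ k, conj (S k 1) * R k b) := by
                refine sum_congr rfl fun j _ => ?_
                rw [Finset.mul_sum, Finset.mul_sum, Finset.mul_sum, ← Finset.sum_add_distrib]
                exact sum_congr rfl fun k _ => by simp only [inn]; ring
            _ = (∑ j, conj (R j a) * S j 0) * (∑ k, conj (S k 0) * R k b)
                + (∑ j, conj (R j a) * S j 1) * (∑ k, conj (S k 1) * R k b) := by
                rw [Finset.sum_add_distrib, ← Finset.sum_mul, ← Finset.sum_mul]
            _ = (∑ j, conj (S j a) * R j 0) * (∑ j, conj (S j 0) * R j b)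
                + (∑ j, conj (S j a) * R j 1) * (∑ j, conj (S j 1) * R j b) := by
                rw [← KI hL a 0, ← KI hL a 1]
  linear_combination (-I) * key + ((∑ j, z j * (conj (S j a) * R j b))
    - ∑ j, conj (z j) * (conj (R j a) * S j b)) * Complex.I_sq

lemma Cconj (hL : L1sys z S R) (a b : Fin 2) :
    conj (∑ j, conj (S j a) * R j b) = ∑ j, conj (S j b) * R j a := by
  rw [map_sum]
  calc ∑ j, conj (conj (S j a) * R j b)
      = ∑ j, conj (R j b) * S j a := by
        exact sum_congr rfl fun j _ => by rw [_root_.map_mul, Complex.conj_conj]; try ring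
    _ = ∑ j, conj (S j b) * R j a := (KI hL b a).symm

lemma flip (hL : L1sys z S R) (a b : Fin 2) :
    ∑ m, R m a * conj (S m b) = ∑ j, conj (S j b) * R j a := by
  have h1 : ∑ m, R m a * conj (S m b) = conj (∑ m, conj (S m a) * R m b) := by
    rw [KI hL a b, map_sum]
    exact sum_congr rfl fun m _ => by rw [_root_.map_mul, Complex.conj_conj]; try ring
  rw [h1, Cconj hL a b]

lemma SmulVec (hL : L1sys z S R) (k : Fin n) (b : Fin 2) :
    S k b = ∑ j, gram z S k j * R j b := by
  have h := congrFun (hL k) b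
  simp only [Finset.sum_apply, Pi.smul_apply, smul_eq_mul] at h
  have h2 : ∑ j, gram z S k j * R j b
      = -I * ∑ j, inn (S j) (S k) / (starRingEnd ℂ (z k) - z j) * R j b := by
    rw [Finset.mul_sum]; exact sum_congr rfl fun j _ => by
      simp only [_root_.gram, Matrix.of_apply]; ring
  rw [h2, ← h]
  simp [← mul_assoc]

lemma dressQ_eq (hM : IsUnit (gram z S)) (hL : L1sys z S R) (q0 : ℂ) :
    dressQ z q0 S = q0 - 2 * ∑ k, R k 0 * conj (S k 1) := by
  have hdet : (gram z S).det ≠ 0 :=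
    ((Matrix.isUnit_iff_isUnit_det _).mp hM).ne_zero
  have hS0 : (fun j => S j 0) = (gram z S).mulVec (fun j => R j 0) := by
    funext k; simpa [Matrix.mulVec, dotProduct] using SmulVec hL k 0
  have hrow : ∀ k, ∑ j, cof (gram z S) j k * S j 0 = (gram z S).det * R k 0 := by
    intro k
    have h3 : ∑ j, cof (gram z S) j k * S j 0
        = ((gram z S).adjugate.mulVec (fun j => S j 0)) k := by
      simp [Matrix.mulVec, dotProduct, cof]
    rw [h3, hS0, Matrix.mulVec_mulVec, Matrix.adjugate_mul, Matrix.smul_mulVec,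
      Matrix.one_mulVec]
    simp
  have h4 : ∑ k, ∑ j, cof (gram z S) j k * S j 0 * conj (S k 1)
      = (gram z S).det * ∑ k, R k 0 * conj (S k 1) := by
    rw [Finset.mul_sum]
    refine sum_congr rfl fun k _ => ?_
    rw [show ∑ j, cof (gram z S) j k * S j 0 * conj (S k 1)
        = (∑ j, cof (gram z S) j k * S j 0) * conj (S k 1) by rw [Finset.sum_mul],
      hrow k]
    ring
  rw [dressQ, h4]
  field_simp

lemma q_atom (hL : L1sys z S R) {qv q0 : ℂ}
    (hq : qv = q0 - 2 * ∑ m, R m 0 * conj (S m 1)) :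
    qv = q0 - 2 * ∑ j, conj (S j 1) * R j 0 := by
  rw [hq, flip hL 0 1]

lemma qc_atom (hL : L1sys z S R) {qv q0 : ℂ}
    (hq : qv = q0 - 2 * ∑ m, R m 0 * conj (S m 1)) :
    conj qv = conj q0 - 2 * ∑ j, conj (S j 0) * R j 1 := by
  have h := congrArg conj (q_atom hL hq)
  simp only [map_sub, _root_.map_mul, map_ofNat] at h
  rw [h, Cconj hL 1 0]

lemma qx_atom (hL : L1sys z S R) {qv q0 qxv q0x : ℂ}
    (hqx : qxv = q0x - 2 * ∑ m, (((Ux (z m) qv).mulVec (R m)) 0 * conj (S m 1)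
      + R m 0 * conj (((Ux (conj (z m)) q0).mulVec (S m)) 1))) :
    qxv = q0x + 4*I*(∑ j, z j * (conj (S j 1) * R j 0))
      - 2*qv*(∑ j, conj (S j 1) * R j 1) + 2*q0*(∑ j, conj (S j 0) * R j 0) := by
  rw [hqx]
  rw [Finset.sum_congr rfl (fun m _ => show ((Ux (z m) qv).mulVec (R m)) 0 * conj (S m 1)
      + R m 0 * conj (((Ux (conj (z m)) q0).mulVec (S m)) 1)
      = (-2*I)*(z m * (conj (S m 1) * R m 0)) + qv*(R m 1 * conj (S m 1))
        - q0*(R m 0 * conj (S m 0)) from by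
    rw [Ux_mulVec0, Ux_mulVec1]
    simp only [map_add, _root_.map_mul, map_neg, Complex.conj_I, Complex.conj_conj]
    ring)]
  simp only [Finset.sum_add_distrib, Finset.sum_sub_distrib, ← Finset.mul_sum]
  rw [flip hL 1 1, flip hL 0 0]
  ring

lemma Pz_conj (hL : L1sys z S R) (hd : ∀ k j, conj (z k) - z j ≠ 0) :
    conj (∑ j, z j * (conj (S j 1) * R j 0))
      = ∑ j, z j * (conj (S j 0) * R j 1)
        - I*((∑ j, conj (S j 0) * R j 0) * (∑ j, conj (S j 0) * R j 1)
           + (∑ j, conj (S j 0) * R j 1) * (∑ j, conj (S j 1) * R j 1)) := by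
  have h1 : conj (∑ j, z j * (conj (S j 1) * R j 0))
      = ∑ j, conj (z j) * (conj (R j 0) * S j 1) := by
    rw [map_sum]
    exact sum_congr rfl fun j _ => by
      simp only [_root_.map_mul, Complex.conj_conj]; ring
  rw [h1]
  linear_combination -(KZ hL hd 0 1)

lemma qxc_atom (hL : L1sys z S R) (hd : ∀ k j, conj (z k) - z j ≠ 0) {qv q0 qxv q0x : ℂ}
    (hqx : qxv = q0x - 2 * ∑ m, (((Ux (z m) qv).mulVec (R m)) 0 * conj (S m 1)
      + R m 0 * conj (((Ux (conj (z m)) q0).mulVec (S m)) 1))) :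
    conj qxv = conj q0x - 4*I*(∑ j, z j * (conj (S j 0) * R j 1))
      - 4*((∑ j, conj (S j 0) * R j 0) * (∑ j, conj (S j 0) * R j 1)
         + (∑ j, conj (S j 0) * R j 1) * (∑ j, conj (S j 1) * R j 1))
      - 2*(conj qv)*(∑ j, conj (S j 1) * R j 1) + 2*(conj q0)*(∑ j, conj (S j 0) * R j 0) := by
  have h := congrArg conj (qx_atom hL hqx)
  simp only [map_add, map_sub, _root_.map_mul, map_ofNat, Complex.conj_I] at h
  rw [h, Pz_conj hL hd, Cconj hL 1 1, Cconj hL 0 0]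
  linear_combination (4*((∑ j, conj (S j 0) * R j 0) * (∑ j, conj (S j 0) * R j 1)
    + (∑ j, conj (S j 0) * R j 1) * (∑ j, conj (S j 1) * R j 1))) * Complex.I_sq

lemma hSb_lem (hL : L1sys z S R) (k : Fin n) :
    ∀ b, ∑ j, (-I * (inn (S j) (S k) / (conj (z k) - z j))) * R j b = S k b := by
  intro b
  have h1 : ∑ j, (-I * (inn (S j) (S k) / (conj (z k) - z j))) * R j b
      = -I * ∑ j, inn (S j) (S k) / (conj (z k) - z j) * R j b := by
    rw [Finset.mul_sum]; exact sum_congr rfl fun j _ => by ring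
  rw [h1, ← L1b hL k b, ← mul_assoc, neg_mul, Complex.I_mul_I, neg_neg, one_mul]

lemma key_lem (hL : L1sys z S R) (k : Fin n) (c₁ c₂ : ℂ) :
    ∑ j, (-I * (inn (S j) (S k) / (conj (z k) - z j))) * (c₁ * R j 0 + c₂ * R j 1)
      = c₁ * S k 0 + c₂ * S k 1 := by
  have h1 : ∑ j, (-I * (inn (S j) (S k) / (conj (z k) - z j))) * (c₁ * R j 0 + c₂ * R j 1)
      = ∑ j, (c₁ * ((-I * (inn (S j) (S k) / (conj (z k) - z j))) * R j 0)
            + c₂ * ((-I * (inn (S j) (S k) / (conj (z k) - z j))) * R j 1)) := by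
    exact sum_congr rfl fun j _ => by ring
  rw [h1, Finset.sum_add_distrib, ← Finset.mul_sum, ← Finset.mul_sum,
    hSb_lem hL k 0, hSb_lem hL k 1]

lemma xe2 (hd : ∀ k j, conj (z k) - z j ≠ 0) (q0 : ℂ) (k j : Fin n) :
    -I * (inn ((Ux (conj (z j)) q0).mulVec (S j)) (S k)
        + inn (S j) ((Ux (conj (z k)) q0).mulVec (S k))) / (conj (z k) - z j)
    = -(conj (S j 0) * S k 0 - conj (S j 1) * S k 1) := by
  rw [Ux_adj]
  have := hd k j
  rw [div_eq_iff this]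
  linear_combination (((conj (z k)) - z j) * (conj (S j 0) * S k 0 - conj (S j 1) * S k 1))
    * Complex.I_sq

lemma xMAIN0 (hL : L1sys z S R) (hd : ∀ k j, conj (z k) - z j ≠ 0) {qv q0 : ℂ}
    (hq : qv = q0 - 2 * ∑ m, R m 0 * conj (S m 1)) (k : Fin n) :
    ∑ j, gram z S k j * ((Ux (z j) qv).mulVec (R j)) 0
      + ∑ j, (-I * (inn ((Ux (conj (z j)) q0).mulVec (S j)) (S k)
          + inn (S j) ((Ux (conj (z k)) q0).mulVec (S k))) / (conj (z k) - z j)) * R j 0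
    = ((Ux (conj (z k)) q0).mulVec (S k)) 0 := by
  rw [Finset.sum_congr rfl fun j _ => show (-I * (inn ((Ux (conj (z j)) q0).mulVec (S j)) (S k)
          + inn (S j) ((Ux (conj (z k)) q0).mulVec (S k))) / (conj (z k) - z j)) * R j 0
      = -(conj (S j 0) * S k 0 - conj (S j 1) * S k 1) * R j 0 from by rw [xe2 hd q0 k j]]
  rw [Finset.sum_congr rfl (fun j _ => show gram z S k j * ((Ux (z j) qv).mulVec (R j)) 0
      = (-I * (inn (S j) (S k) / (conj (z k) - z j)))
          * ((-(I*conj (z k))) * R j 0 + qv * R j 1)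
        + inn (S j) (S k) * R j 0 from by
    rw [Ux_mulVec0]
    simp only [_root_.gram, Matrix.of_apply, inn]
    have := hd k j
    field_simp
    linear_combination (-((conj (S j 0) * S k 0 + conj (S j 1) * S k 1)
      * (conj (z k) - z j) * R j 0)) * Complex.I_sq)]
  rw [Finset.sum_add_distrib, key_lem hL k, add_assoc, ← Finset.sum_add_distrib]
  rw [Finset.sum_congr rfl (fun j _ => show inn (S j) (S k) * R j 0
      + -(conj (S j 0) * S k 0 - conj (S j 1) * S k 1) * R j 0
      = 2 * S k 1 * (conj (S j 1) * R j 0) from by simp only [inn]; ring),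
    ← Finset.mul_sum, Ux_mulVec0, ← flip hL 0 1]
  linear_combination S k 1 * hq

lemma xMAIN1 (hL : L1sys z S R) (hd : ∀ k j, conj (z k) - z j ≠ 0) {qv q0 : ℂ}
    (hq : qv = q0 - 2 * ∑ m, R m 0 * conj (S m 1)) (k : Fin n) :
    ∑ j, gram z S k j * ((Ux (z j) qv).mulVec (R j)) 1
      + ∑ j, (-I * (inn ((Ux (conj (z j)) q0).mulVec (S j)) (S k)
          + inn (S j) ((Ux (conj (z k)) q0).mulVec (S k))) / (conj (z k) - z j)) * R j 1
    = ((Ux (conj (z k)) q0).mulVec (S k)) 1 := by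
  rw [Finset.sum_congr rfl fun j _ => show (-I * (inn ((Ux (conj (z j)) q0).mulVec (S j)) (S k)
          + inn (S j) ((Ux (conj (z k)) q0).mulVec (S k))) / (conj (z k) - z j)) * R j 1
      = -(conj (S j 0) * S k 0 - conj (S j 1) * S k 1) * R j 1 from by rw [xe2 hd q0 k j]]
  rw [Finset.sum_congr rfl (fun j _ => show gram z S k j * ((Ux (z j) qv).mulVec (R j)) 1
      = (-I * (inn (S j) (S k) / (conj (z k) - z j)))
          * ((-(conj qv)) * R j 0 + (I*conj (z k)) * R j 1)
        + inn (S j) (S k) * (-(R j 1)) from by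
    rw [Ux_mulVec1]
    simp only [_root_.gram, Matrix.of_apply, inn]
    have := hd k j
    field_simp
    linear_combination ((conj (S j 0) * S k 0 + conj (S j 1) * S k 1)
      * (conj (z k) - z j) * R j 1) * Complex.I_sq)]
  rw [Finset.sum_add_distrib, key_lem hL k, add_assoc, ← Finset.sum_add_distrib]
  rw [Finset.sum_congr rfl (fun j _ => show inn (S j) (S k) * (-(R j 1))
      + -(conj (S j 0) * S k 0 - conj (S j 1) * S k 1) * R j 1
      = (-2) * S k 0 * (conj (S j 0) * R j 1) from by simp only [inn]; ring),
    ← Finset.mul_sum, Ux_mulVec1]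
  have hqc := qc_atom hL hq
  linear_combination (-(S k 0)) * hqc

lemma te2 (hd : ∀ k j, conj (z k) - z j ≠ 0) (q0 q0x : ℂ) (k j : Fin n) :
    -I * (inn ((Vt (conj (z j)) q0 q0x).mulVec (S j)) (S k)
        + inn (S j) ((Vt (conj (z k)) q0 q0x).mulVec (S k))) / (conj (z k) - z j)
    = -2*(conj (z k) + z j) * (conj (S j 0) * S k 0 - conj (S j 1) * S k 1)
      - 2*I*(conj (S j 0) * q0 * S k 1 - conj (S j 1) * conj q0 * S k 0) := by
  rw [Vt_adj]
  have := hd k j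
  rw [div_eq_iff this]
  linear_combination (2*((conj (z k))^2 - (z j)^2)
    * (conj (S j 0) * S k 0 - conj (S j 1) * S k 1)) * Complex.I_sq

lemma tMAIN0 (hL : L1sys z S R) (hd : ∀ k j, conj (z k) - z j ≠ 0) {qv q0 qxv q0x : ℂ}
    (hq : qv = q0 - 2 * ∑ m, R m 0 * conj (S m 1))
    (hqx : qxv = q0x - 2 * ∑ m, (((Ux (z m) qv).mulVec (R m)) 0 * conj (S m 1)
      + R m 0 * conj (((Ux (conj (z m)) q0).mulVec (S m)) 1))) (k : Fin n) :
    ∑ j, gram z S k j * ((Vt (z j) qv qxv).mulVec (R j)) 0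
      + ∑ j, (-I * (inn ((Vt (conj (z j)) q0 q0x).mulVec (S j)) (S k)
          + inn (S j) ((Vt (conj (z k)) q0 q0x).mulVec (S k))) / (conj (z k) - z j)) * R j 0
    = ((Vt (conj (z k)) q0 q0x).mulVec (S k)) 0 := by
  rw [Finset.sum_congr rfl fun j _ => show (-I * (inn ((Vt (conj (z j)) q0 q0x).mulVec (S j)) (S k)
          + inn (S j) ((Vt (conj (z k)) q0 q0x).mulVec (S k))) / (conj (z k) - z j)) * R j 0
      = (-2*(conj (z k) + z j) * (conj (S j 0) * S k 0 - conj (S j 1) * S k 1)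
        - 2*I*(conj (S j 0) * q0 * S k 1 - conj (S j 1) * conj q0 * S k 0)) * R j 0 from by
    rw [te2 hd q0 q0x k j]]
  rw [Finset.sum_congr rfl (fun j _ => show gram z S k j * ((Vt (z j) qv qxv).mulVec (R j)) 0
      = (-I * (inn (S j) (S k) / (conj (z k) - z j)))
          * ((I*(qv * conj qv - 2*(conj (z k))^2)) * R j 0 + (2*(conj (z k))*qv + I*qxv) * R j 1)
        + inn (S j) (S k) * (2*(conj (z k) + z j)*R j 0 + 2*I*qv*R j 1) from by
    rw [Vt_mulVec0]
    simp only [_root_.gram, Matrix.of_apply, inn]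
    have := hd k j
    field_simp
    linear_combination (2*((z j)^2 - (conj (z k))^2)
      * (conj (S j 0)*S k 0 + conj (S j 1)*S k 1) * R j 0) * Complex.I_sq)]
  rw [Finset.sum_add_distrib, key_lem hL k, add_assoc, ← Finset.sum_add_distrib]
  rw [Finset.sum_congr rfl (fun j _ =>
    show inn (S j) (S k) * (2*(conj (z k) + z j)*R j 0 + 2*I*qv*R j 1)
      + (-2*(conj (z k) + z j) * (conj (S j 0) * S k 0 - conj (S j 1) * S k 1)
        - 2*I*(conj (S j 0) * q0 * S k 1 - conj (S j 1) * conj q0 * S k 0)) * R j 0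
      = 4*S k 1*conj (z k)*(conj (S j 1)*R j 0) + 4*S k 1*(z j*(conj (S j 1)*R j 0))
        + 2*I*qv*S k 0*(conj (S j 0)*R j 1) + 2*I*qv*S k 1*(conj (S j 1)*R j 1)
        - 2*I*q0*S k 1*(conj (S j 0)*R j 0) + 2*I*(conj q0)*S k 0*(conj (S j 1)*R j 0)
      from by simp only [inn]; ring)]
  simp only [Finset.sum_add_distrib, Finset.sum_sub_distrib, ← Finset.mul_sum]
  rw [Vt_mulVec0]
  have hq' := q_atom hL hq
  have hqc := qc_atom hL hq
  have hqx' := qx_atom hL hqx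
  rw [hqx', hqc, hq']
  linear_combination (4*S k 1*(∑ j, z j*(conj (S j 1)*R j 0))) * Complex.I_sq

lemma tMAIN1 (hL : L1sys z S R) (hd : ∀ k j, conj (z k) - z j ≠ 0) {qv q0 qxv q0x : ℂ}
    (hq : qv = q0 - 2 * ∑ m, R m 0 * conj (S m 1))
    (hqx : qxv = q0x - 2 * ∑ m, (((Ux (z m) qv).mulVec (R m)) 0 * conj (S m 1)
      + R m 0 * conj (((Ux (conj (z m)) q0).mulVec (S m)) 1))) (k : Fin n) :
    ∑ j, gram z S k j * ((Vt (z j) qv qxv).mulVec (R j)) 1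
      + ∑ j, (-I * (inn ((Vt (conj (z j)) q0 q0x).mulVec (S j)) (S k)
          + inn (S j) ((Vt (conj (z k)) q0 q0x).mulVec (S k))) / (conj (z k) - z j)) * R j 1
    = ((Vt (conj (z k)) q0 q0x).mulVec (S k)) 1 := by
  rw [Finset.sum_congr rfl fun j _ => show (-I * (inn ((Vt (conj (z j)) q0 q0x).mulVec (S j)) (S k)
          + inn (S j) ((Vt (conj (z k)) q0 q0x).mulVec (S k))) / (conj (z k) - z j)) * R j 1
      = (-2*(conj (z k) + z j) * (conj (S j 0) * S k 0 - conj (S j 1) * S k 1)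
        - 2*I*(conj (S j 0) * q0 * S k 1 - conj (S j 1) * conj q0 * S k 0)) * R j 1 from by
    rw [te2 hd q0 q0x k j]]
  rw [Finset.sum_congr rfl (fun j _ => show gram z S k j * ((Vt (z j) qv qxv).mulVec (R j)) 1
      = (-I * (inn (S j) (S k) / (conj (z k) - z j)))
          * ((-(2*(conj (z k))*conj qv) + I*conj qxv) * R j 0
            + (-(I*(qv * conj qv - 2*(conj (z k))^2))) * R j 1)
        + inn (S j) (S k) * (-2*(conj (z k) + z j)*R j 1 - 2*I*(conj qv)*R j 0) from by
    rw [Vt_mulVec1]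
    simp only [_root_.gram, Matrix.of_apply, inn]
    have := hd k j
    field_simp
    linear_combination (2*((conj (z k))^2 - (z j)^2)
      * (conj (S j 0)*S k 0 + conj (S j 1)*S k 1) * R j 1) * Complex.I_sq)]
  rw [Finset.sum_add_distrib, key_lem hL k, add_assoc, ← Finset.sum_add_distrib]
  rw [Finset.sum_congr rfl (fun j _ =>
    show inn (S j) (S k) * (-2*(conj (z k) + z j)*R j 1 - 2*I*(conj qv)*R j 0)
      + (-2*(conj (z k) + z j) * (conj (S j 0) * S k 0 - conj (S j 1) * S k 1)
        - 2*I*(conj (S j 0) * q0 * S k 1 - conj (S j 1) * conj q0 * S k 0)) * R j 1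
      = -4*S k 0*conj (z k)*(conj (S j 0)*R j 1) - 4*S k 0*(z j*(conj (S j 0)*R j 1))
        - 2*I*(conj qv)*S k 0*(conj (S j 0)*R j 0) - 2*I*(conj qv)*S k 1*(conj (S j 1)*R j 0)
        - 2*I*q0*S k 1*(conj (S j 0)*R j 1) + 2*I*(conj q0)*S k 0*(conj (S j 1)*R j 1)
      from by simp only [inn]; ring)]
  simp only [Finset.sum_add_distrib, Finset.sum_sub_distrib, ← Finset.mul_sum]
  rw [Vt_mulVec1]
  have hq' := q_atom hL hq
  have hqc := qc_atom hL hq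
  have hqxc := qxc_atom hL hd hqx
  rw [hqxc, hqc, hq']
  linear_combination (-4*S k 0*(∑ j, z j*(conj (S j 0)*R j 1))) * Complex.I_sq

end Pointwise

section Analysis

lemma mulVec_eq_sum {n : ℕ} (A : Matrix (Fin n) (Fin n) ℂ) (v : Fin n → ℂ) (k : Fin n) :
    (A.mulVec v) k = ∑ j, A k j * v j := by
  simp [Matrix.mulVec, dotProduct]

lemma det_diffAt {n : ℕ} (M : ℝ → Matrix (Fin n) (Fin n) ℂ) (t : ℝ)
    (h : ∀ i j, DifferentiableAt ℝ (fun u => M u i j) t) :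
    DifferentiableAt ℝ (fun u => (M u).det) t := by
  simp only [Matrix.det_apply']
  refine DifferentiableAt.fun_sum fun σ _ => DifferentiableAt.const_mul ?_ _
  exact DifferentiableAt.fun_finsetProd fun i _ => h (σ i) i

lemma adj_diffAt {n : ℕ} (M : ℝ → Matrix (Fin n) (Fin n) ℂ) (t : ℝ)
    (h : ∀ i j, DifferentiableAt ℝ (fun u => M u i j) t) (k j : Fin n) :
    DifferentiableAt ℝ (fun u => (M u).adjugate k j) t := by
  simp only [Matrix.adjugate_apply]
  refine det_diffAt _ t fun i l => ?_
  rcases eq_or_ne i j with rfl | hij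
  · simpa [Matrix.updateRow_apply] using differentiableAt_const _
  · simpa [Matrix.updateRow_apply, hij] using h i l

lemma inv_diffAt {n : ℕ} (M : ℝ → Matrix (Fin n) (Fin n) ℂ) (t : ℝ)
    (h : ∀ i j, DifferentiableAt ℝ (fun u => M u i j) t)
    (hdet : (M t).det ≠ 0) (k j : Fin n) :
    DifferentiableAt ℝ (fun u => (M u)⁻¹ k j) t := by
  have e : (fun u => (M u)⁻¹ k j)
      = fun u => ((M u).det)⁻¹ * (M u).adjugate k j := by
    funext u
    rw [Matrix.inv_def, Matrix.smul_apply, Ring.inverse_eq_inv, smul_eq_mul]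
  rw [e]
  exact ((det_diffAt M t h).inv hdet).mul (adj_diffAt M t h k j)

lemma r_deriv_system {n : ℕ} {z : Fin n → ℂ}
    (S R : ℝ → Fin n → Fin 2 → ℂ) (DS : Fin n → Fin 2 → ℂ) (t0 : ℝ)
    (hM : ∀ u, IsUnit (gram z (S u)))
    (hL : ∀ u, L1sys z (S u) (R u))
    (hds : ∀ k b, HasDerivAt (fun u => S u k b) (DS k b) t0) :
    (∀ k b, DifferentiableAt ℝ (fun u => R u k b) t0) ∧
    (∀ k b, ∑ j, ((-I * (inn (DS j) (S t0 k) + inn (S t0 j) (DS k)) / (conj (z k) - z j))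
          * R t0 j b
        + gram z (S t0) k j * deriv (fun u => R u j b) t0) = DS k b) := by
  have hGd : ∀ k j, HasDerivAt (fun u => gram z (S u) k j)
      (-I * (inn (DS j) (S t0 k) + inn (S t0 j) (DS k)) / (conj (z k) - z j)) t0 := by
    intro k j
    have c0 : HasDerivAt (fun u => conj (S u j 0)) (conj (DS j 0)) t0 := by
      simpa only [← starRingEnd_apply] using (hds j 0).star
    have c1 : HasDerivAt (fun u => conj (S u j 1)) (conj (DS j 1)) t0 := by
      simpa only [← starRingEnd_apply] using (hds j 1).star
    have h0 : HasDerivAt (fun u => inn (S u j) (S u k))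
        (inn (DS j) (S t0 k) + inn (S t0 j) (DS k)) t0 := by
      have := (c0.mul (hds k 0)).add (c1.mul (hds k 1))
      refine this.congr_deriv ?_
      simp only [inn]
      ring
    have := (h0.const_mul (-I)).div_const (conj (z k) - z j)
    exact this
  have hGdiff : ∀ k j, DifferentiableAt ℝ (fun u => gram z (S u) k j) t0 :=
    fun k j => (hGd k j).differentiableAt
  have hdet0 : ((fun u => gram z (S u)) t0).det ≠ 0 :=
    ((Matrix.isUnit_iff_isUnit_det _).mp (hM t0)).ne_zero
  have hRformula : ∀ u k b, R u k b = ∑ j, (gram z (S u))⁻¹ k j * S u j b := by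
    intro u k b
    have hu : IsUnit (gram z (S u)).det := (Matrix.isUnit_iff_isUnit_det _).mp (hM u)
    have hmv : (gram z (S u)).mulVec (fun j => R u j b) = fun j => S u j b := by
      funext kk
      rw [mulVec_eq_sum]
      exact (SmulVec (hL u) kk b).symm
    calc R u k b = ((gram z (S u))⁻¹.mulVec ((gram z (S u)).mulVec (fun j => R u j b))) k := by
          rw [Matrix.mulVec_mulVec, Matrix.nonsing_inv_mul _ hu, Matrix.one_mulVec]
      _ = ∑ j, (gram z (S u))⁻¹ k j * S u j b := by rw [hmv, mulVec_eq_sum]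
  have hRdiff : ∀ k b, DifferentiableAt ℝ (fun u => R u k b) t0 := by
    intro k b
    rw [show (fun u => R u k b) = (fun u => ∑ j, (gram z (S u))⁻¹ k j * S u j b)
      from funext fun u => hRformula u k b]
    exact DifferentiableAt.fun_sum fun j _ =>
      (inv_diffAt (fun u => gram z (S u)) t0 hGdiff hdet0 k j).mul (hds j b).differentiableAt
  refine ⟨hRdiff, fun k b => ?_⟩
  have hsum : HasDerivAt (fun u => ∑ j, gram z (S u) k j * R u j b)
      (∑ j, ((-I * (inn (DS j) (S t0 k) + inn (S t0 j) (DS k)) / (conj (z k) - z j))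
          * R t0 j b
        + gram z (S t0) k j * deriv (fun u => R u j b) t0)) t0 :=
    HasDerivAt.fun_sum fun j _ => (hGd k j).mul ((hRdiff j b).hasDerivAt)
  rw [show (fun u => ∑ j, gram z (S u) k j * R u j b) = fun u => S u k b
    from funext fun u => (SmulVec (hL u) k b).symm] at hsum
  exact hsum.unique (hds k b)

end Analysis

end NLS9

/-- Time evolution of the dressing transformation: the `r_k` solve the `t`-part of the
Lax pair for the dressed potential `q`. -/
theorem stmt_9 (n : ℕ) (hn : 1 ≤ n) (q₀ : ℝ → ℝ → ℂ) (hq₀ : IsClassicalNLS q₀)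
    (z : Fin n → ℂ) (hz : Function.Injective z) (him : ∀ k, 0 < (z k).im)
    (s : Fin n → ℝ → ℝ → Fin 2 → ℂ)
    (hsC1 : ∀ k, ContDiff ℝ 1 fun p : ℝ × ℝ => s k p.1 p.2)
    (hsx : ∀ k x t, HasDerivAt (fun y => s k y t)
      ((Ux (starRingEnd ℂ (z k)) (q₀ x t)).mulVec (s k x t)) x)
    (hst : ∀ k x t, HasDerivAt (fun τ => s k x τ)
      ((Vt (starRingEnd ℂ (z k)) (q₀ x t) (deriv (fun y => q₀ y t) x)).mulVec (s k x t)) t)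
    (hM : ∀ x t, IsUnit (gram z fun k => s k x t))
    (r : Fin n → ℝ → ℝ → Fin 2 → ℂ)
    (hr : ∀ x t, L1sys z (fun k => s k x t) fun k => r k x t)
    (q : ℝ → ℝ → ℂ) (hq : ∀ x t, q x t = dressQ z (q₀ x t) fun k => s k x t) :
    ∀ k x t, HasDerivAt (fun τ => r k x τ)
      ((Vt (z k) (q x t) (deriv (fun y => q y t) x)).mulVec (r k x t)) t := by
  intro k x t
  classical
  open Complex ComplexConjugate Finset NLS9 in
  have hdz : ∀ a b : Fin n, conj (z a) - z b ≠ 0 := by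
    intro a b h
    have ha := him a
    have hb := him b
    have h2 := congrArg Complex.im h
    simp only [Complex.sub_im, Complex.conj_im, Complex.zero_im] at h2
    linarith
  have hqpt : ∀ y τ, q y τ = q₀ y τ - 2 * ∑ m, r m y τ 0 * conj (s m y τ 1) :=
    fun y τ => by rw [hq y τ]; exact dressQ_eq (hM y τ) (hr y τ) (q₀ y τ)
  have hinvG : IsUnit (gram z (fun m => s m x t)).det :=
    (Matrix.isUnit_iff_isUnit_det _).mp (hM x t)
  -- x-direction
  obtain ⟨hxdiff, hxeq0⟩ := r_deriv_system (z := z) (fun u kk => s kk u t)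
    (fun u kk => r kk u t)
    (fun kk => (Ux (conj (z kk)) (q₀ x t)).mulVec (s kk x t)) x
    (fun u => hM u t) (fun u => hr u t)
    (fun kk b => (hasDerivAt_pi.mp (hsx kk x t)) b)
  have hxeq : ∀ (kk : Fin n) (b : Fin 2),
      ∑ j, ((-I * (inn ((Ux (conj (z j)) (q₀ x t)).mulVec (s j x t)) (s kk x t)
            + inn (s j x t) ((Ux (conj (z kk)) (q₀ x t)).mulVec (s kk x t)))
            / (conj (z kk) - z j)) * r j x t b
          + gram z (fun m => s m x t) kk j * deriv (fun u => r j u t b) x)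
        = ((Ux (conj (z kk)) (q₀ x t)).mulVec (s kk x t)) b := fun kk b => hxeq0 kk b
  have hxmain : ∀ (kk : Fin n) (b : Fin 2),
      ∑ j, gram z (fun m => s m x t) kk j * ((Ux (z j) (q x t)).mulVec (r j x t)) b
        + ∑ j, (-I * (inn ((Ux (conj (z j)) (q₀ x t)).mulVec (s j x t)) (s kk x t)
            + inn (s j x t) ((Ux (conj (z kk)) (q₀ x t)).mulVec (s kk x t)))
            / (conj (z kk) - z j)) * r j x t b
      = ((Ux (conj (z kk)) (q₀ x t)).mulVec (s kk x t)) b := by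
    intro kk b
    fin_cases b
    · exact xMAIN0 (hr x t) hdz (hqpt x t) kk
    · exact xMAIN1 (hr x t) hdz (hqpt x t) kk
  have hRx : ∀ (b : Fin 2) (m : Fin n),
      deriv (fun u => r m u t b) x = ((Ux (z m) (q x t)).mulVec (r m x t)) b := by
    intro b
    have hGw : ∀ kk, ∑ j, gram z (fun m => s m x t) kk j
        * (deriv (fun u => r j u t b) x - ((Ux (z j) (q x t)).mulVec (r j x t)) b) = 0 := by
      intro kk
      have E1 := hxeq kk b
      have E2 := hxmain kk b
      rw [Finset.sum_add_distrib] at E1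
      calc ∑ j, gram z (fun m => s m x t) kk j
          * (deriv (fun u => r j u t b) x - ((Ux (z j) (q x t)).mulVec (r j x t)) b)
          = ∑ j, (gram z (fun m => s m x t) kk j * deriv (fun u => r j u t b) x
            - gram z (fun m => s m x t) kk j * ((Ux (z j) (q x t)).mulVec (r j x t)) b) :=
          Finset.sum_congr rfl fun j _ => mul_sub _ _ _
        _ = ∑ j, gram z (fun m => s m x t) kk j * deriv (fun u => r j u t b) x
            - ∑ j, gram z (fun m => s m x t) kk j * ((Ux (z j) (q x t)).mulVec (r j x t)) b :=
          by rw [Finset.sum_sub_distrib]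
        _ = 0 := by linear_combination E1 - E2
    intro m
    have h1 : (gram z (fun m => s m x t))⁻¹.mulVec
        ((gram z (fun m => s m x t)).mulVec (fun j =>
          deriv (fun u => r j u t b) x - ((Ux (z j) (q x t)).mulVec (r j x t)) b))
        = (fun j => deriv (fun u => r j u t b) x - ((Ux (z j) (q x t)).mulVec (r j x t)) b) := by
      rw [Matrix.mulVec_mulVec, Matrix.nonsing_inv_mul _ hinvG, Matrix.one_mulVec]
    have h2 : (gram z (fun m => s m x t)).mulVec (fun j =>
        deriv (fun u => r j u t b) x - ((Ux (z j) (q x t)).mulVec (r j x t)) b) = 0 := by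
      funext kk
      rw [NLS9.mulVec_eq_sum]
      exact hGw kk
    rw [h2, Matrix.mulVec_zero] at h1
    have := congrFun h1 m
    simp only [Pi.zero_apply] at this
    exact sub_eq_zero.mp this.symm
  have hRxH : ∀ (m : Fin n) (b : Fin 2), HasDerivAt (fun y => r m y t b)
      (((Ux (z m) (q x t)).mulVec (r m x t)) b) x := by
    intro m b
    have h := (hxdiff m b).hasDerivAt
    rwa [hRx b m] at h
  -- derivative of q in x
  have hsconj : ∀ (m : Fin n), HasDerivAt (fun y => conj (s m y t 1))
      (conj (((Ux (conj (z m)) (q₀ x t)).mulVec (s m x t)) 1)) x := by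
    intro m
    simpa only [← starRingEnd_apply] using ((hasDerivAt_pi.mp (hsx m x t)) 1).star
  have hq0d : HasDerivAt (fun y => q₀ y t) (deriv (fun y => q₀ y t) x) x :=
    (((hq₀.1 t).differentiable (by norm_num)) x).hasDerivAt
  have hqd : HasDerivAt (fun y => q y t)
      (deriv (fun y => q₀ y t) x - 2 * ∑ m, (((Ux (z m) (q x t)).mulVec (r m x t)) 0
          * conj (s m x t 1)
        + r m x t 0 * conj (((Ux (conj (z m)) (q₀ x t)).mulVec (s m x t)) 1))) x := by
    rw [show (fun y => q y t) = fun y => q₀ y t - 2 * ∑ m, r m y t 0 * conj (s m y t 1)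
      from funext fun y => hqpt y t]
    have hsum : HasDerivAt (fun y => ∑ m, r m y t 0 * conj (s m y t 1))
        (∑ m, (((Ux (z m) (q x t)).mulVec (r m x t)) 0 * conj (s m x t 1)
          + r m x t 0 * conj (((Ux (conj (z m)) (q₀ x t)).mulVec (s m x t)) 1))) x :=
      HasDerivAt.fun_sum fun m _ => (hRxH m 0).mul (hsconj m)
    exact hq0d.sub (hsum.const_mul 2)
  have hqxv : deriv (fun y => q y t) x
      = deriv (fun y => q₀ y t) x - 2 * ∑ m, (((Ux (z m) (q x t)).mulVec (r m x t)) 0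
          * conj (s m x t 1)
        + r m x t 0 * conj (((Ux (conj (z m)) (q₀ x t)).mulVec (s m x t)) 1)) := hqd.deriv
  -- t-direction
  obtain ⟨htdiff, hteq0⟩ := r_deriv_system (z := z) (fun u kk => s kk x u)
    (fun u kk => r kk x u)
    (fun kk => (Vt (conj (z kk)) (q₀ x t) (deriv (fun y => q₀ y t) x)).mulVec (s kk x t)) t
    (fun u => hM x u) (fun u => hr x u)
    (fun kk b => (hasDerivAt_pi.mp (hst kk x t)) b)
  have hteq : ∀ (kk : Fin n) (b : Fin 2),
      ∑ j, ((-I * (inn ((Vt (conj (z j)) (q₀ x t) (deriv (fun y => q₀ y t) x)).mulVec (s j x t))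
              (s kk x t)
            + inn (s j x t) ((Vt (conj (z kk)) (q₀ x t)
              (deriv (fun y => q₀ y t) x)).mulVec (s kk x t)))
            / (conj (z kk) - z j)) * r j x t b
          + gram z (fun m => s m x t) kk j * deriv (fun u => r j x u b) t)
        = ((Vt (conj (z kk)) (q₀ x t) (deriv (fun y => q₀ y t) x)).mulVec (s kk x t)) b :=
    fun kk b => hteq0 kk b
  have htmain : ∀ (kk : Fin n) (b : Fin 2),
      ∑ j, gram z (fun m => s m x t) kk j
          * ((Vt (z j) (q x t) (deriv (fun y => q y t) x)).mulVec (r j x t)) b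
        + ∑ j, (-I * (inn ((Vt (conj (z j)) (q₀ x t)
              (deriv (fun y => q₀ y t) x)).mulVec (s j x t)) (s kk x t)
            + inn (s j x t) ((Vt (conj (z kk)) (q₀ x t)
              (deriv (fun y => q₀ y t) x)).mulVec (s kk x t)))
            / (conj (z kk) - z j)) * r j x t b
      = ((Vt (conj (z kk)) (q₀ x t) (deriv (fun y => q₀ y t) x)).mulVec (s kk x t)) b := by
    intro kk b
    fin_cases b
    · exact tMAIN0 (hr x t) hdz (hqpt x t) hqxv kk
    · exact tMAIN1 (hr x t) hdz (hqpt x t) hqxv kk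
  have hRt : ∀ (b : Fin 2) (m : Fin n),
      deriv (fun u => r m x u b) t
        = ((Vt (z m) (q x t) (deriv (fun y => q y t) x)).mulVec (r m x t)) b := by
    intro b
    have hGw : ∀ kk, ∑ j, gram z (fun m => s m x t) kk j
        * (deriv (fun u => r j x u b) t
          - ((Vt (z j) (q x t) (deriv (fun y => q y t) x)).mulVec (r j x t)) b) = 0 := by
      intro kk
      have E1 := hteq kk b
      have E2 := htmain kk b
      rw [Finset.sum_add_distrib] at E1
      calc ∑ j, gram z (fun m => s m x t) kk j
          * (deriv (fun u => r j x u b) t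
            - ((Vt (z j) (q x t) (deriv (fun y => q y t) x)).mulVec (r j x t)) b)
          = ∑ j, (gram z (fun m => s m x t) kk j * deriv (fun u => r j x u b) t
            - gram z (fun m => s m x t) kk j
              * ((Vt (z j) (q x t) (deriv (fun y => q y t) x)).mulVec (r j x t)) b) :=
          Finset.sum_congr rfl fun j _ => mul_sub _ _ _
        _ = ∑ j, gram z (fun m => s m x t) kk j * deriv (fun u => r j x u b) t
            - ∑ j, gram z (fun m => s m x t) kk j
              * ((Vt (z j) (q x t) (deriv (fun y => q y t) x)).mulVec (r j x t)) b :=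
          by rw [Finset.sum_sub_distrib]
        _ = 0 := by linear_combination E1 - E2
    intro m
    have h1 : (gram z (fun m => s m x t))⁻¹.mulVec
        ((gram z (fun m => s m x t)).mulVec (fun j => deriv (fun u => r j x u b) t
          - ((Vt (z j) (q x t) (deriv (fun y => q y t) x)).mulVec (r j x t)) b))
        = (fun j => deriv (fun u => r j x u b) t
          - ((Vt (z j) (q x t) (deriv (fun y => q y t) x)).mulVec (r j x t)) b) := by
      rw [Matrix.mulVec_mulVec, Matrix.nonsing_inv_mul _ hinvG, Matrix.one_mulVec]
    have h2 : (gram z (fun m => s m x t)).mulVec (fun j => deriv (fun u => r j x u b) t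
        - ((Vt (z j) (q x t) (deriv (fun y => q y t) x)).mulVec (r j x t)) b) = 0 := by
      funext kk
      rw [NLS9.mulVec_eq_sum]
      exact hGw kk
    rw [h2, Matrix.mulVec_zero] at h1
    have h3 := congrFun h1 m
    simp only [Pi.zero_apply] at h3
    exact sub_eq_zero.mp h3.symm
  refine hasDerivAt_pi.mpr fun b => ?_
  have h := (htdiff k b).hasDerivAt
  rwa [hRt b k] at h
end
end

section
/- Let η₁, η₂ > 0 and ξ₁, ξ₂ ∈ ℝ, and set γ := 2η₁η₂((η₁+η₂)² + (ξ₁−ξ₂)²). Then for any real numbers φ₁, φ₂, ψ₁, ψ₂, the quantity D^S := (e^{−2η₁φ₁} + e^{2η₁φ₁})(e^{−2η₂φ₂} + e^{2η₂φ₂})/(4η₁η₂) − (e^{−η₁φ₁−η₂φ₂+i(ψ₁−ψ₂)} + e^{η₁φ₁+η₂φ₂−i(ψ₁−ψ₂)})(e^{−η₁φ₁−η₂φ₂−i(ψ₁−ψ₂)} + e^{η₁φ₁+η₂φ₂+i(ψ₁−ψ₂)})/((η₁+η₂)² + (ξ₁−ξ₂)²) is real and satisfies the identity γ · D^S = ((η₁−η₂)²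 + (ξ₁−ξ₂)²) cosh(2(η₁φ₁ + η₂φ₂)) + ((η₁+η₂)² + (ξ₁−ξ₂)²) cosh(2(η₁φ₁ − η₂φ₂)) − 4η₁η₂ cos(2(ψ₁ − ψ₂)). -/
open MeasureTheory Matrix ENNReal Filter

noncomputable section

set_option maxHeartbeats 1600000

/-- `D^S` is real and `γ D^S = ((η₁-η₂)² + (ξ₁-ξ₂)²) cosh(2(η₁φ₁+η₂φ₂))
+ ((η₁+η₂)² + (ξ₁-ξ₂)²) cosh(2(η₁φ₁-η₂φ₂)) - 4η₁η₂ cos(2(ψ₁-ψ₂))`. -/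
theorem stmt_14 (η₁ η₂ : ℝ) (hη₁ : 0 < η₁) (hη₂ : 0 < η₂) (ξ₁ ξ₂ φ₁ φ₂ ψ₁ ψ₂ : ℝ) :
    (DSof η₁ η₂ ξ₁ ξ₂ φ₁ φ₂ ψ₁ ψ₂).im = 0 ∧
      ((2 * η₁ * η₂ * ((η₁ + η₂) ^ 2 + (ξ₁ - ξ₂) ^ 2) : ℝ) : ℂ) *
          DSof η₁ η₂ ξ₁ ξ₂ φ₁ φ₂ ψ₁ ψ₂ =
        ((((η₁ - η₂) ^ 2 + (ξ₁ - ξ₂) ^ 2) * Real.cosh (2 * (η₁ * φ₁ + η₂ * φ₂)) +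
            ((η₁ + η₂) ^ 2 + (ξ₁ - ξ₂) ^ 2) * Real.cosh (2 * (η₁ * φ₁ - η₂ * φ₂)) -
            4 * η₁ * η₂ * Real.cos (2 * (ψ₁ - ψ₂)) : ℝ) : ℂ) := by
  set R : ℝ := ((η₁ - η₂) ^ 2 + (ξ₁ - ξ₂) ^ 2) * Real.cosh (2 * (η₁ * φ₁ + η₂ * φ₂)) +
      ((η₁ + η₂) ^ 2 + (ξ₁ - ξ₂) ^ 2) * Real.cosh (2 * (η₁ * φ₁ - η₂ * φ₂)) -
      4 * η₁ * η₂ * Real.cos (2 * (ψ₁ - ψ₂)) with hR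
  set γ : ℝ := 2 * η₁ * η₂ * ((η₁ + η₂) ^ 2 + (ξ₁ - ξ₂) ^ 2) with hγ
  have hP : (0:ℝ) < (η₁ + η₂) ^ 2 + (ξ₁ - ξ₂) ^ 2 := by positivity
  have hγ0 : γ ≠ 0 := by positivity
  have key : DSof η₁ η₂ ξ₁ ξ₂ φ₁ φ₂ ψ₁ ψ₂ = ((R / γ : ℝ) : ℂ) := by
    have hU := Complex.exp_ne_zero ((η₁:ℂ) * φ₁)
    have hV := Complex.exp_ne_zero ((η₂:ℂ) * φ₂)
    have hW := Complex.exp_ne_zero (Complex.I * ((ψ₁:ℂ) - ψ₂))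
    have hη₁c : (η₁:ℂ) ≠ 0 := by exact_mod_cast hη₁.ne'
    have hη₂c : (η₂:ℂ) ≠ 0 := by exact_mod_cast hη₂.ne'
    have hPc : (((η₁:ℂ) + η₂) ^ 2 + ((ξ₁:ℂ) - ξ₂) ^ 2) ≠ 0 := by
      have h0 : ((((η₁ + η₂) ^ 2 + (ξ₁ - ξ₂) ^ 2 : ℝ)) : ℂ) ≠ 0 := by
        exact_mod_cast hP.ne'
      push_cast at h0
      exact h0
    have hcosh : ∀ x : ℂ, Complex.cosh x = (Complex.exp x + Complex.exp (-x)) / 2 := by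
      intro x; linear_combination (Complex.two_cosh x) / 2
    have hcos : ∀ x : ℂ, Complex.cos x =
        (Complex.exp (x * Complex.I) + Complex.exp (-x * Complex.I)) / 2 := by
      intro x; linear_combination (Complex.two_cos x) / 2
    rw [DSof, hR, hγ]
    push_cast [Complex.ofReal_cosh, Complex.ofReal_cos]
    rw [hcosh, hcosh, hcos]
    rw [show (-2*(η₁:ℂ)*φ₁) = -((η₁:ℂ)*φ₁) + -((η₁:ℂ)*φ₁) by ring,
        show (2*(η₁:ℂ)*φ₁) = ((η₁:ℂ)*φ₁) + ((η₁:ℂ)*φ₁) by ring,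
        show (-2*(η₂:ℂ)*φ₂) = -((η₂:ℂ)*φ₂) + -((η₂:ℂ)*φ₂) by ring,
        show (2*(η₂:ℂ)*φ₂) = ((η₂:ℂ)*φ₂) + ((η₂:ℂ)*φ₂) by ring,
        show (-(η₁:ℂ)*φ₁ - (η₂:ℂ)*φ₂ + Complex.I*((ψ₁:ℂ) - ψ₂)) =
          -((η₁:ℂ)*φ₁) + (-((η₂:ℂ)*φ₂) + Complex.I*((ψ₁:ℂ) - ψ₂)) by ring,
        show ((η₁:ℂ)*φ₁ + (η₂:ℂ)*φ₂ - Complex.I*((ψ₁:ℂ) - ψ₂)) =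
          ((η₁:ℂ)*φ₁) + (((η₂:ℂ)*φ₂) + -(Complex.I*((ψ₁:ℂ) - ψ₂))) by ring,
        show (-(η₁:ℂ)*φ₁ - (η₂:ℂ)*φ₂ - Complex.I*((ψ₁:ℂ) - ψ₂)) =
          -((η₁:ℂ)*φ₁) + (-((η₂:ℂ)*φ₂) + -(Complex.I*((ψ₁:ℂ) - ψ₂))) by ring,
        show ((η₁:ℂ)*φ₁ + (η₂:ℂ)*φ₂ + Complex.I*((ψ₁:ℂ) - ψ₂)) =
          ((η₁:ℂ)*φ₁) + (((η₂:ℂ)*φ₂) + (Complex.I*((ψ₁:ℂ) - ψ₂))) by ring,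
        show (-((2:ℂ)*(↑η₁*↑φ₁ + ↑η₂*↑φ₂))) = (-((η₁:ℂ)*φ₁) + -((η₁:ℂ)*φ₁)) + (-((η₂:ℂ)*φ₂) + -((η₂:ℂ)*φ₂)) by ring,
        show ((2:ℂ)*(↑η₁*↑φ₁ + ↑η₂*↑φ₂)) = ((η₁:ℂ)*φ₁ + (η₁:ℂ)*φ₁) + ((η₂:ℂ)*φ₂ + (η₂:ℂ)*φ₂) by ring,
        show (-((2:ℂ)*(↑η₁*↑φ₁ - ↑η₂*↑φ₂))) = (-((η₁:ℂ)*φ₁) + -((η₁:ℂ)*φ₁)) + ((η₂:ℂ)*φ₂ + (η₂:ℂ)*φ₂) by ring,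
        show ((2:ℂ)*(↑η₁*↑φ₁ - ↑η₂*↑φ₂)) = ((η₁:ℂ)*φ₁ + (η₁:ℂ)*φ₁) + (-((η₂:ℂ)*φ₂) + -((η₂:ℂ)*φ₂)) by ring,
        show (-((2:ℂ)*(↑ψ₁ - ↑ψ₂))*Complex.I) = -(Complex.I*((ψ₁:ℂ) - ψ₂)) + -(Complex.I*((ψ₁:ℂ) - ψ₂)) by ring,
        show ((2:ℂ)*(↑ψ₁ - ↑ψ₂)*Complex.I) = Complex.I*((ψ₁:ℂ) - ψ₂) + Complex.I*((ψ₁:ℂ) - ψ₂) by ring]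
    simp only [Complex.exp_add]
    rw [show (((η₁:ℂ) - η₂) ^ 2 + ((ξ₁:ℂ) - ξ₂) ^ 2) =
        ((((η₁:ℂ) + η₂) ^ 2 + ((ξ₁:ℂ) - ξ₂) ^ 2)) - 4*(η₁:ℂ)*η₂ by ring]
    have h1 : Complex.exp ((η₁:ℂ) * φ₁) * Complex.exp (-((η₁:ℂ) * φ₁)) = 1 := by
      rw [← Complex.exp_add]; simp
    have h2 : Complex.exp ((η₂:ℂ) * φ₂) * Complex.exp (-((η₂:ℂ) * φ₂)) = 1 := by
      rw [← Complex.exp_add]; simp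
    have h3 : Complex.exp (Complex.I * ((ψ₁:ℂ) - ψ₂)) *
        Complex.exp (-(Complex.I * ((ψ₁:ℂ) - ψ₂))) = 1 := by
      rw [← Complex.exp_add]; simp
    generalize hUU : Complex.exp ((η₁:ℂ) * φ₁) = U at h1 ⊢
    generalize hUU' : Complex.exp (-((η₁:ℂ) * φ₁)) = U' at h1 ⊢
    generalize hVV : Complex.exp ((η₂:ℂ) * φ₂) = V at h2 ⊢
    generalize hVV' : Complex.exp (-((η₂:ℂ) * φ₂)) = V' at h2 ⊢
    generalize hWW : Complex.exp (Complex.I * ((ψ₁:ℂ) - ψ₂)) = W at h3 ⊢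
    generalize hWW' : Complex.exp (-(Complex.I * ((ψ₁:ℂ) - ψ₂))) = W' at h3 ⊢
    generalize hPP : (((η₁:ℂ) + η₂) ^ 2 + ((ξ₁:ℂ) - ξ₂) ^ 2) = P at hPc ⊢
    rw [div_sub_div _ _ (by norm_num [hη₁c, hη₂c] : (4:ℂ)*(η₁:ℂ)*η₂ ≠ 0) hPc,
        div_eq_div_iff (mul_ne_zero (by norm_num [hη₁c, hη₂c]) hPc)
          (by norm_num [hη₁c, hη₂c, hPc] : (2:ℂ)*(η₁:ℂ)*η₂*P ≠ 0)]
    linear_combination (-(8*(η₁:ℂ)^2*(η₂:ℂ)^2*P)) *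
      ((U^2*V^2 + U'^2*V'^2) * h3 + (W^2 + W'^2) * (V*V'*h1 + h2))
  refine ⟨by rw [key]; exact Complex.ofReal_im _, ?_⟩
  rw [key, ← Complex.ofReal_mul]
  congr 1
  field_simp
end
end
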